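/- Let x₀ > 0 and let φ : (0,∞) → ℝ be continuous with φ(z) < 0 for all z > 0 and ∫_0^{x₀} 1/(−φ(z)) dz = +∞. Let T > 0 and let q : [0,T) → (0,∞) be differentiable with q'(t) = φ(q(t)) for all t ∈ [0,T). Then inf_{t ∈ [0,T)} q(t) > 0. -/

import Mathlib

open MeasureTheory Set Filter Topology

/-- if `∫_0^{x₀} dz/(−φ(z)) = ∞`, a solution of `q' = φ(q)` with values
in `(0,∞)` stays bounded away from `0` on any finite time horizon. -/
theorem ode_solution_bounded_away_from_zero
    (x₀ : ℝ) (hx₀ : 0 < x₀)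
    (φ : ℝ → ℝ) (hφ_cont : ContinuousOn φ (Ioi 0))
    (hφ_neg : ∀ z > (0 : ℝ), φ z < 0)
    (hdiv : ∫⁻ z in Ioo 0 x₀, ENNReal.ofReal (1 / (-φ z)) = ⊤)
    (T : ℝ) (hT : 0 < T)
    (q : ℝ → ℝ)
    (hq_pos : ∀ t ∈ Ico 0 T, 0 < q t)
    (hq_deriv : ∀ t ∈ Ico 0 T, HasDerivAt q (φ (q t)) t) :
    0 < sInf (q '' Ico 0 T) := by
  set f : ℝ → ℝ := fun z => 1 / (-φ z) with hf_def
  have hf_cont : ContinuousOn f (Ioi 0) := by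
    apply ContinuousOn.div continuousOn_const hφ_cont.neg
    intro z hz
    exact ne_of_gt (neg_pos.2 (hφ_neg z hz))
  have hf_pos : ∀ z ∈ Ioi (0:ℝ), 0 < f z := by
    intro z hz
    exact div_pos one_pos (neg_pos.2 (hφ_neg z hz))
  have h0T : (0:ℝ) ∈ Ico 0 T := ⟨le_refl 0, hT⟩
  set a : ℝ := q 0 with ha_def
  have ha : 0 < a := hq_pos 0 h0T
  -- the function t ↦ ∫ a..q t f has derivative -1 on [0,T)
  set w : ℝ → ℝ := fun s => ∫ x in a..(q s), f x with hw_def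
  have hw_deriv : ∀ t ∈ Ico 0 T, HasDerivAt w (-1) t := by
    intro t ht
    have hqt : 0 < q t := hq_pos t ht
    have hsub : uIcc a (q t) ⊆ Ioi 0 := by
      intro z hz
      have := hz.1
      have hmin : min a (q t) ≤ z := this
      have : 0 < min a (q t) := lt_min ha hqt
      exact lt_of_lt_of_le this hmin
    have hint : IntervalIntegrable f volume a (q t) :=
      (hf_cont.mono hsub).intervalIntegrable
    have hmeas : StronglyMeasurableAtFilter f (𝓝 (q t)) volume :=
      hf_cont.stronglyMeasurableAtFilter isOpen_Ioi _ hqt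
    have hcontAt : ContinuousAt f (q t) :=
      hf_cont.continuousAt (Ioi_mem_nhds hqt)
    have hG : HasDerivAt (fun u => ∫ x in a..u, f x) (f (q t)) (q t) :=
      intervalIntegral.integral_hasDerivAt_right hint hmeas hcontAt
    have hcomp : HasDerivAt w (f (q t) * φ (q t)) t :=
      hG.comp t (hq_deriv t ht)
    have hval : f (q t) * φ (q t) = -1 := by
      have hne : φ (q t) ≠ 0 := ne_of_lt (hφ_neg _ hqt)
      rw [hf_def]; dsimp only; rw [div_mul_eq_mul_div, one_mul, div_neg, div_self hne]
    rwa [hval] at hcomp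
  -- hence w t = -t on [0,T)
  have hw_eq : ∀ t ∈ Ico 0 T, w t = -t := by
    intro t ht
    have hIcc : Icc 0 t ⊆ Ico 0 T := fun s hs => ⟨hs.1, lt_of_le_of_lt hs.2 ht.2⟩
    have hIco : Ico 0 t ⊆ Ico 0 T := fun s hs => ⟨hs.1, lt_of_lt_of_le hs.2 (le_of_lt ht.2)⟩
    have key : ∀ s ∈ Icc 0 t, (fun u => w u + u) s = (fun u => w u + u) 0 := by
      apply constant_of_has_deriv_right_zero
      · intro s hs
        exact ((hw_deriv s (hIcc hs)).add (hasDerivAt_id s)).continuousAt.continuousWithinAt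
      · intro s hs
        have : HasDerivAt (fun u => w u + u) (-1 + 1) s :=
          (hw_deriv s (hIco hs)).add (hasDerivAt_id s)
        simpa using this.hasDerivWithinAt (s := Ici s)
    have h1 := key t ⟨ht.1, le_refl t⟩
    have hw0 : w 0 = 0 := by simp [hw_def, ha_def]
    simp only [hw0, add_zero] at h1
    linarith
  -- consequently, for t ∈ [0,T) with q t ≤ a, ∫ over Ioc (q t) a of f equals t
  -- set up the contradiction
  by_contra hcon
  have hne : (q '' Ico 0 T).Nonempty := ⟨q 0, mem_image_of_mem q h0T⟩
  have hbdd : BddBelow (q '' Ico 0 T) := by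
    refine ⟨0, fun y hy => ?_⟩
    obtain ⟨t, ht, rfl⟩ := hy
    exact le_of_lt (hq_pos t ht)
  have hInf0 : sInf (q '' Ico 0 T) ≤ 0 := not_lt.1 hcon
  -- for every ε > 0 there is t ∈ [0,T) with q t < ε
  have hsmall : ∀ ε > (0:ℝ), ∃ t ∈ Ico 0 T, q t < ε := by
    intro ε hε
    have : sInf (q '' Ico 0 T) < ε := lt_of_le_of_lt hInf0 hε
    obtain ⟨y, hy, hyε⟩ := exists_lt_of_csInf_lt hne this
    obtain ⟨t, ht, rfl⟩ := hy
    exact ⟨t, ht, hyε⟩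
  set c : ℝ := min a x₀ with hc_def
  have hc : 0 < c := lt_min ha hx₀
  have hca : c ≤ a := min_le_left _ _
  have hcx : c ≤ x₀ := min_le_right _ _
  -- the measure ν with density ofReal ∘ f
  set ν : Measure ℝ := volume.withDensity (fun z => ENNReal.ofReal (f z)) with hν_def
  have hν_apply : ∀ s : Set ℝ, MeasurableSet s → ν s = ∫⁻ z in s, ENNReal.ofReal (f z) := by
    intro s hs
    exact withDensity_apply _ hs
  -- ν of compact subintervals of (0,∞) is finite
  have hfin : ∀ b₁ b₂ : ℝ, 0 < b₁ → ν (Icc b₁ b₂) < ⊤ := by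
    intro b₁ b₂ hb₁
    rw [hν_apply _ measurableSet_Icc]
    apply IntegrableOn.setLIntegral_lt_top
    apply ContinuousOn.integrableOn_compact isCompact_Icc
    apply hf_cont.mono
    intro z hz
    exact lt_of_lt_of_le hb₁ hz.1
  -- bound : for all ε > 0, ν (Ioo ε c) ≤ ofReal T
  have hbound : ∀ ε > (0:ℝ), ν (Ioo ε c) ≤ ENNReal.ofReal T := by
    intro ε hε
    obtain ⟨t, ht, hqtε⟩ := hsmall ε hε
    have hqt : 0 < q t := hq_pos t ht
    rcases le_or_gt c ε with hle | hlt
    · rw [hν_apply _ measurableSet_Ioo]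
      rw [Ioo_eq_empty (not_lt.2 hle)]
      simp
    · have hqa : q t < a := lt_of_lt_of_le (lt_of_lt_of_le (lt_of_lt_of_le hqtε (le_of_lt hlt)) hca) (le_refl a)
      have hsub2 : Ioc (q t) a ⊆ Ioi 0 := fun z hz => lt_trans hqt hz.1
      have hint2 : IntegrableOn f (Ioc (q t) a) := by
        apply (ContinuousOn.integrableOn_compact isCompact_Icc (hf_cont.mono ?_)).mono_set Ioc_subset_Icc_self
        intro z hz; exact lt_of_lt_of_le hqt hz.1
      have hIoc : ∫ x in Ioc (q t) a, f x = t := by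
        have := hw_eq t ht
        rw [hw_def] at this
        have h1 : ∫ x in a..(q t), f x = -t := this
        have h2 : ∫ x in (q t)..a, f x = t := by
          rw [intervalIntegral.integral_symm] at h1
          linarith
        rwa [intervalIntegral.integral_of_le (le_of_lt hqa)] at h2
      have hlin : ∫⁻ z in Ioc (q t) a, ENNReal.ofReal (f z) = ENNReal.ofReal t := by
        rw [← MeasureTheory.ofReal_integral_eq_lintegral_ofReal hint2]
        · rw [hIoc]
        · filter_upwards [ae_restrict_mem measurableSet_Ioc] with z hz
          exact le_of_lt (hf_pos z (hsub2 hz))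
      calc ν (Ioo ε c) ≤ ν (Ioc (q t) a) := by
            apply measure_mono
            intro z hz
            exact ⟨lt_trans hqtε hz.1, le_trans (le_of_lt hz.2) hca⟩
        _ = ENNReal.ofReal t := by rw [hν_apply _ measurableSet_Ioc, hlin]
        _ ≤ ENNReal.ofReal T := ENNReal.ofReal_le_ofReal (le_of_lt ht.2)
  -- ν (Ioo 0 c) = ⊤ from hdiv
  have hνdiv : ν (Ioo 0 c) = ⊤ := by
    have h1 : ν (Ioo 0 x₀) = ⊤ := by rw [hν_apply _ measurableSet_Ioo]; exact hdiv
    have hsplit : Ioo 0 x₀ ⊆ Ioo 0 c ∪ Icc c x₀ := by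
      intro z hz
      rcases lt_or_ge z c with h | h
      · exact Or.inl ⟨hz.1, h⟩
      · exact Or.inr ⟨h, le_of_lt hz.2⟩
    have h2 : ν (Ioo 0 x₀) ≤ ν (Ioo 0 c) + ν (Icc c x₀) :=
      le_trans (measure_mono hsplit) (measure_union_le _ _)
    by_contra hne'
    have h3 : ν (Ioo 0 c) < ⊤ := lt_top_iff_ne_top.2 hne'
    have h4 : ν (Ioo 0 c) + ν (Icc c x₀) < ⊤ := ENNReal.add_lt_top.2 ⟨h3, hfin c x₀ hc⟩
    rw [h1] at h2
    exact absurd (lt_of_le_of_lt h2 h4) (lt_irrefl ⊤)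
  -- but Ioo 0 c is the increasing union of Ioo (c/(n+1)) c, each of ν-measure ≤ T
  have hunion : Ioo (0:ℝ) c = ⋃ n : ℕ, Ioo (c / (n + 1)) c := by
    ext z
    simp only [mem_Ioo, mem_iUnion]
    constructor
    · rintro ⟨hz0, hzc⟩
      obtain ⟨n, hn⟩ := exists_nat_gt (c / z)
      refine ⟨n, ?_, hzc⟩
      rw [div_lt_iff₀ (by positivity)]
      rw [div_lt_iff₀ hz0] at hn
      nlinarith
    · rintro ⟨n, hn1, hn2⟩
      exact ⟨lt_of_le_of_lt (by positivity) hn1, hn2⟩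
  have hmono : Monotone (fun n : ℕ => Ioo (c / (n + 1)) c) := by
    intro m n hmn
    apply Ioo_subset_Ioo_left
    have hcast : (m:ℝ) + 1 ≤ (n:ℝ) + 1 := by exact_mod_cast Nat.succ_le_succ hmn
    exact div_le_div_of_nonneg_left hc.le (by positivity) hcast
  have hsup : ν (Ioo 0 c) = ⨆ n : ℕ, ν (Ioo (c / (n + 1)) c) := by
    rw [hunion]
    exact hmono.directed_le.measure_iUnion
  have hle : ν (Ioo 0 c) ≤ ENNReal.ofReal T := by
    rw [hsup]
    apply iSup_le
    intro n
    exact hbound _ (by positivity)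
  rw [hνdiv] at hle
  exact absurd (lt_of_le_of_lt (le_trans hle (le_refl _)) (ENNReal.ofReal_lt_top)) (by simp)
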